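/- Let a < b, let 1 ≤ p ≤ ∞, and let φ be a nonnegative continuous function on [a,b] with ∫_a^b φ(x) dx = 1. There exists a constant C, depending only on a, b and p, such that for every function f on [a,b] which is differentiable with derivative f′, and with f, f′ ∈ L^p[a,b], one has ‖f − ∫_a^b f(x)φ(x) dx‖_{L^p[a,b]} ≤ C ‖f′‖_{L^p[a,b]} (the subtracted quantity being the constant function with that value). -/

import Mathlib

open MeasureTheory Real Filter Topology ENNReal
noncomputable section
namespace Paper

/-- (Generalized Poincaré inequality.) Let `a < b`, `1 ≤ p ≤ ∞`, and let
`φ ≥ 0` be continuous on `[a,b]` with `∫_a^b φ = 1`. There is a constant `C` (depending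
only on `a`, `b`, `p`) such that for every `f` differentiable on `[a,b]` with derivative
`f'`, both in `L^p[a,b]`:
`‖f - ∫_a^b f φ‖_{L^p[a,b]} ≤ C ‖f'‖_{L^p[a,b]}`. -/
theorem weighted_poincare (a b : ℝ) (hab : a < b) (p : ℝ≥0∞) (hp : 1 ≤ p)
    (φ : ℝ → ℝ) (hφcont : ContinuousOn φ (Set.Icc a b))
    (hφnonneg : ∀ x ∈ Set.Icc a b, 0 ≤ φ x) (hφint : ∫ x in a..b, φ x = 1) :
    ∃ C : ℝ, 0 < C ∧ ∀ f f' : ℝ → ℝ,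
      (∀ x ∈ Set.Icc a b, HasDerivWithinAt f (f' x) (Set.Icc a b) x) →
      MemLp f p (volume.restrict (Set.Icc a b)) →
      MemLp f' p (volume.restrict (Set.Icc a b)) →
      eLpNorm (fun x => f x - ∫ t in a..b, f t * φ t) p (volume.restrict (Set.Icc a b)) ≤
        ENNReal.ofReal C * eLpNorm f' p (volume.restrict (Set.Icc a b)) := by
  set μ := volume.restrict (Set.Icc a b) with hμ
  have hba : (0:ℝ) < b - a := by linarith
  refine ⟨b - a, hba, ?_⟩
  intro f f' hderiv hf hf'
  haveI : IsFiniteMeasure μ := ⟨by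
    rw [hμ, Measure.restrict_apply_univ, Real.volume_Icc]
    exact ENNReal.ofReal_lt_top⟩
  have hμuniv : μ Set.univ = ENNReal.ofReal (b - a) := by
    rw [hμ, Measure.restrict_apply_univ, Real.volume_Icc]
  set V : ℝ≥0∞ := ENNReal.ofReal (b - a) with hV
  have hV0 : V ≠ 0 := by simp [hV]; linarith
  have hVtop : V ≠ ⊤ := ENNReal.ofReal_ne_top
  have hfc : ContinuousOn f (Set.Icc a b) := fun x hx => (hderiv x hx).continuousWithinAt
  have hInt : IntegrableOn f' (Set.Icc a b) volume := hf'.integrable hp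
  set M : ℝ := ∫ s in Set.Icc a b, |f' s| with hM
  have hM0 : 0 ≤ M := setIntegral_nonneg measurableSet_Icc fun s _ => abs_nonneg _
  -- FTC on subintervals
  have key : ∀ t ∈ Set.Icc a b, ∀ x ∈ Set.Icc a b, t ≤ x →
      f x - f t = ∫ s in t..x, f' s := by
    intro t ht x hx htx
    have h1 : ContinuousOn f (Set.Icc t x) := hfc.mono (Set.Icc_subset_Icc ht.1 hx.2)
    have h2 : ∀ s ∈ Set.Ioo t x, HasDerivWithinAt f (f' s) (Set.Ioi s) s := by
      intro s hs
      have hs' : s ∈ Set.Ioo a b := ⟨lt_of_le_of_lt ht.1 hs.1, lt_of_lt_of_le hs.2 hx.2⟩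
      exact ((hderiv s (Set.Ioo_subset_Icc_self hs')).hasDerivAt
        (Icc_mem_nhds hs'.1 hs'.2)).hasDerivWithinAt
    have h3 : IntervalIntegrable f' volume t x :=
      (hInt.mono_set (by rw [Set.uIcc_of_le htx]; exact Set.Icc_subset_Icc ht.1 hx.2)).intervalIntegrable
    exact (intervalIntegral.integral_eq_sub_of_hasDeriv_right_of_le htx h1 h2 h3).symm
  have hstep : ∀ t ∈ Set.Icc a b, ∀ x ∈ Set.Icc a b, t ≤ x → |f x - f t| ≤ M := by
    intro t ht x hx htx
    rw [key t ht x hx htx]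
    calc |∫ s in t..x, f' s| ≤ ∫ s in t..x, |f' s| :=
          intervalIntegral.abs_integral_le_integral_abs htx
      _ = ∫ s in Set.Ioc t x, |f' s| := intervalIntegral.integral_of_le htx
      _ ≤ M := by
          refine setIntegral_mono_set hInt.abs (ae_of_all _ fun s => abs_nonneg _) ?_
          exact (Set.Ioc_subset_Icc_self.trans (Set.Icc_subset_Icc ht.1 hx.2)).eventuallyLE
  have hdist : ∀ x ∈ Set.Icc a b, ∀ t ∈ Set.Icc a b, |f x - f t| ≤ M := by
    intro x hx t ht
    rcases le_total t x with h | h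
    · exact hstep t ht x hx h
    · rw [abs_sub_comm]; exact hstep x hx t ht h
  -- pointwise bound
  set c : ℝ := ∫ t in a..b, f t * φ t with hc
  have huIcc : Set.uIcc a b = Set.Icc a b := Set.uIcc_of_le hab.le
  have hφi : IntervalIntegrable φ volume a b := (huIcc ▸ hφcont).intervalIntegrable
  have hfφ : IntervalIntegrable (fun t => f t * φ t) volume a b :=
    (huIcc ▸ (hfc.mul hφcont)).intervalIntegrable
  have hptwise : ∀ x ∈ Set.Icc a b, |f x - c| ≤ M := by
    intro x hx
    have hcx : IntervalIntegrable (fun t => f x * φ t) volume a b := hφi.const_mul _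
    have heq : f x - c = ∫ t in a..b, (f x - f t) * φ t := by
      have : ∀ t, (f x - f t) * φ t = f x * φ t - f t * φ t := fun t => by ring
      simp_rw [this]
      rw [intervalIntegral.integral_sub hcx hfφ, intervalIntegral.integral_const_mul, hφint,
        mul_one]
    rw [heq]
    have habs : IntervalIntegrable (fun t => |(f x - f t) * φ t|) volume a b :=
      (huIcc ▸ ((continuousOn_const.sub hfc).mul hφcont).abs).intervalIntegrable
    have hMφ : IntervalIntegrable (fun t => M * φ t) volume a b := hφi.const_mul _
    calc |∫ t in a..b, (f x - f t) * φ t| ≤ ∫ t in a..b, |(f x - f t) * φ t| :=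
          intervalIntegral.abs_integral_le_integral_abs hab.le
      _ ≤ ∫ t in a..b, M * φ t := by
          refine intervalIntegral.integral_mono_on hab.le habs hMφ fun t ht => ?_
          rw [abs_mul, abs_of_nonneg (hφnonneg t ht)]
          exact mul_le_mul_of_nonneg_right (hdist x hx t ht) (hφnonneg t ht)
      _ = M := by rw [intervalIntegral.integral_const_mul, hφint, mul_one]
  -- eLpNorm estimates
  have h1 : eLpNorm (fun x => f x - c) p μ ≤ V ^ p.toReal⁻¹ * ENNReal.ofReal M := by
    have hb : ∀ᵐ x ∂μ, ‖f x - c‖ ≤ M := by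
      rw [hμ, ae_restrict_iff' measurableSet_Icc]
      exact ae_of_all _ fun x hx => by rw [Real.norm_eq_abs]; exact hptwise x hx
    simpa [hμuniv] using eLpNorm_le_of_ae_bound hb
  have h2 : ENNReal.ofReal M = eLpNorm f' 1 μ := by
    rw [eLpNorm_one_eq_lintegral_enorm, ← ofReal_integral_norm_eq_lintegral_enorm hInt]
    simp [hM, Real.norm_eq_abs, hμ]
  have h3 : eLpNorm f' 1 μ ≤ eLpNorm f' p μ * V ^ (1 - p.toReal⁻¹) := by
    have := eLpNorm_le_eLpNorm_mul_rpow_measure_univ hp hf'.1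
    simpa [hμuniv, one_div] using this
  calc eLpNorm (fun x => f x - c) p μ ≤ V ^ p.toReal⁻¹ * ENNReal.ofReal M := h1
    _ ≤ V ^ p.toReal⁻¹ * (eLpNorm f' p μ * V ^ (1 - p.toReal⁻¹)) := by
        rw [h2]; exact mul_le_mul_right h3 _
    _ = (V ^ p.toReal⁻¹ * V ^ (1 - p.toReal⁻¹)) * eLpNorm f' p μ := by ring
    _ = V * eLpNorm f' p μ := by
        rw [← ENNReal.rpow_add _ _ hV0 hVtop]
        norm_num
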